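/- arXiv:2204.05812 — 4 statements merged into one kernel-verified Lean document; each statement's English description precedes it below -/
import Mathlib

section
/- Let A ∈ ℝ^{n×n} have symmetric part B with spectral factorization B = Z diag(λ_i) Zᵀ (Z orthogonal), and let H = Z diag(|λ_i|) Zᵀ. Then A₊ = (B + H)/2 is a symmetric positive semidefinite matrix that attains the minimum Frobenius distance from A to the set of symmetric positive semidefinite matrices. -/
open Matrix Real Finset

/-- Squared Frobenius norm of a real square matrix. -/
def frobSq {n : ℕ} (A : Matrix (Fin n) (Fin n) ℝ) : ℝ := ∑ i, ∑ j, (A i j)^2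

/-- A matrix is Toeplitz if its entries are constant along diagonals. -/
def IsToeplitz {n : ℕ} (A : Matrix (Fin n) (Fin n) ℝ) : Prop :=
  ∀ i j i' j' : Fin n, (i : ℤ) - (j : ℤ) = (i' : ℤ) - (j' : ℤ) → A i j = A i' j'

/-- The (2k+1)-banded Toeplitz matrix (n;k;σ,δ,τ): subdiagonals σ₁,…,σ_k,
diagonal δ, superdiagonals τ₁,…,τ_k. -/
def bandedToeplitz (n k : ℕ) (σ τ : ℕ → ℝ) (δ : ℝ) : Matrix (Fin n) (Fin n) ℝ :=
  Matrix.of fun i j =>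
    if (i : ℕ) = (j : ℕ) then δ
    else if (j : ℕ) < (i : ℕ) ∧ (i : ℕ) - (j : ℕ) ≤ k then σ ((i : ℕ) - (j : ℕ))
    else if (i : ℕ) < (j : ℕ) ∧ (j : ℕ) - (i : ℕ) ≤ k then τ ((j : ℕ) - (i : ℕ))
    else 0

/-- The tridiagonal Toeplitz matrix (n;1;σ₁,δ,τ₁). -/
def triToeplitz (n : ℕ) (σ₁ δ τ₁ : ℝ) : Matrix (Fin n) (Fin n) ℝ :=
  bandedToeplitz n 1 (fun _ => σ₁) (fun _ => τ₁) δ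

lemma frobSq_eq_trace {n : ℕ} (M : Matrix (Fin n) (Fin n) ℝ) :
    frobSq M = (Mᵀ * M).trace := by
  simp [frobSq, Matrix.trace, Matrix.mul_apply, Matrix.diag, sq]
  exact Finset.sum_comm

lemma frobSq_conj {n : ℕ} (Z M : Matrix (Fin n) (Fin n) ℝ) (hZ : Z * Zᵀ = 1) :
    frobSq (Z * M * Zᵀ) = frobSq M := by
  have hZ' : Zᵀ * Z = 1 := mul_eq_one_comm.mp hZ
  rw [frobSq_eq_trace, frobSq_eq_trace]
  rw [Matrix.transpose_mul, Matrix.transpose_mul, Matrix.transpose_transpose]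
  calc (Zᵀᵀ * (Mᵀ * Zᵀ) * (Z * M * Zᵀ)).trace
      = (Z * (Mᵀ * (Zᵀ * Z) * M) * Zᵀ).trace := by
        rw [Matrix.transpose_transpose]; noncomm_ring
    _ = (Mᵀ * M).trace := by
        rw [hZ', Matrix.mul_one, Matrix.trace_mul_cycle, ← Matrix.mul_assoc, hZ', Matrix.one_mul]

lemma frobSq_add_of_sym_skew {n : ℕ} (X Y : Matrix (Fin n) (Fin n) ℝ)
    (hX : Xᵀ = X) (hY : Yᵀ = -Y) :
    frobSq (X + Y) = frobSq X + frobSq Y := by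
  have hc : ∑ i, ∑ j, X i j * Y i j = 0 := by
    have h1 : ∑ i, ∑ j, X i j * Y i j = ∑ i, ∑ j, -(X j i * Y j i) := by
      refine Finset.sum_congr rfl fun i _ => Finset.sum_congr rfl fun j _ => ?_
      have hx : X j i = X i j := congrFun (congrFun hX i) j
      have hy : Y j i = -Y i j := by simpa using congrFun (congrFun hY i) j
      rw [hx, hy]; ring
    simp only [Finset.sum_neg_distrib] at h1
    rw [Finset.sum_comm]
    rw [Finset.sum_comm] at h1
    linarith
  have key : ∀ i j, (X i j + Y i j)^2 = (X i j)^2 + (Y i j)^2 + 2*(X i j * Y i j) := by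
    intro i j; ring
  simp only [frobSq, Matrix.add_apply, key, Finset.sum_add_distrib, ← Finset.mul_sum, hc]
  ring

lemma diag_bound {n : ℕ} (lam : Fin n → ℝ) (M : Matrix (Fin n) (Fin n) ℝ)
    (hM : M.PosSemidef) :
    ∑ i, (min (lam i) 0)^2 ≤ frobSq (Matrix.diagonal lam - M) := by
  have hdiag : ∀ i, 0 ≤ M i i := fun i => by
    have := hM.dotProduct_mulVec_nonneg (Pi.single i 1)
    simpa [dotProduct, Matrix.mulVec, Pi.single_apply] using this
  unfold frobSq
  refine Finset.sum_le_sum fun i _ => ?_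
  have h1 : ((Matrix.diagonal lam - M) i i)^2 ≤ ∑ j, ((Matrix.diagonal lam - M) i j)^2 :=
    Finset.single_le_sum (f := fun j => ((Matrix.diagonal lam - M) i j)^2)
      (fun j _ => sq_nonneg _) (Finset.mem_univ i)
  refine le_trans ?_ h1
  simp only [Matrix.sub_apply, Matrix.diagonal_apply_eq]
  rcases le_or_gt 0 (lam i) with h | h
  · rw [min_eq_right h]
    simpa using sq_nonneg (lam i - M i i)
  · rw [min_eq_left h.le]
    have hle : |lam i| ≤ |lam i - M i i| := by
      rw [abs_of_neg h, abs_of_nonpos (by linarith [hdiag i])]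
      linarith [hdiag i]
    calc (lam i)^2 = |lam i|^2 := (sq_abs _).symm
      _ ≤ |lam i - M i i|^2 := pow_le_pow_left₀ (abs_nonneg _) hle 2
      _ = (lam i - M i i)^2 := sq_abs _

/-- if `B` is the symmetric part of `A` with spectral factorization
`B = Z diag(λ) Zᵀ` and `H = Z diag(|λ|) Zᵀ`, then `A₊ = (B + H)/2` is a symmetric
positive semidefinite matrix closest to `A` in the Frobenius norm. -/
theorem closest_psd_via_polar_factor {n : ℕ} (A Z : Matrix (Fin n) (Fin n) ℝ)
    (lam : Fin n → ℝ) (hZ : Z * Zᵀ = 1)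
    (hB : ((1:ℝ)/2) • (A + Aᵀ) = Z * Matrix.diagonal lam * Zᵀ) :
    (((1:ℝ)/2) • (((1:ℝ)/2) • (A + Aᵀ) +
        Z * Matrix.diagonal (fun i => |lam i|) * Zᵀ)).PosSemidef ∧
    ∀ S : Matrix (Fin n) (Fin n) ℝ, S.PosSemidef →
      Real.sqrt (frobSq (A - ((1:ℝ)/2) • (((1:ℝ)/2) • (A + Aᵀ) +
          Z * Matrix.diagonal (fun i => |lam i|) * Zᵀ))) ≤
        Real.sqrt (frobSq (A - S)) := by
  set B := ((1:ℝ)/2) • (A + Aᵀ) with hBdef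
  set H := Z * Matrix.diagonal (fun i => |lam i|) * Zᵀ with hHdef
  set P := ((1:ℝ)/2) • (B + H) with hPdef
  have hZ' : Zᵀ * Z = 1 := mul_eq_one_comm.mp hZ
  have hct : Zᵀ = Zᴴ := (Matrix.conjTranspose_eq_transpose_of_trivial Z).symm
  -- P = Z * diagonal ((lam + |lam|)/2) * Zᵀ
  have hPfact : P = Z * Matrix.diagonal (fun i => (lam i + |lam i|)/2) * Zᵀ := by
    rw [hPdef, hB, hHdef]
    rw [← Matrix.add_mul, ← Matrix.mul_add, Matrix.diagonal_add]
    rw [show (Matrix.diagonal fun i => (lam i + |lam i|)/2) =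
        ((1:ℝ)/2) • Matrix.diagonal (fun i => lam i + |lam i|) from by
      ext i j
      by_cases h : i = j
      · subst h; simp [Matrix.diagonal_apply_eq, Matrix.smul_apply, smul_eq_mul]; ring
      · simp [Matrix.diagonal_apply_ne _ h, Matrix.smul_apply, h]]
    rw [Matrix.mul_smul, Matrix.smul_mul]
  constructor
  · rw [hPfact, hct]
    exact (Matrix.PosSemidef.diagonal fun i => by
      have := abs_nonneg (lam i); have := neg_abs_le (lam i)
      dsimp; linarith).mul_mul_conjTranspose_same Z
  · intro S hS
    -- skew part
    have hCskew : (A - B)ᵀ = -(A - B) := by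
      rw [hBdef]
      ext i j
      simp [Matrix.transpose_apply, Matrix.sub_apply, Matrix.add_apply,
        Matrix.smul_apply, Matrix.neg_apply, smul_eq_mul]
      ring
    have hBsym : Bᵀ = B := by
      rw [hBdef]; ext i j
      simp [Matrix.transpose_apply, Matrix.add_apply, Matrix.smul_apply, smul_eq_mul]
      ring
    -- B - P = Z * diagonal (min lam 0) * Zᵀ, symmetric
    have hNfact : B - P = Z * Matrix.diagonal (fun i => min (lam i) 0) * Zᵀ := by
      rw [hPfact, hB]
      rw [← Matrix.sub_mul, ← Matrix.mul_sub, Matrix.diagonal_sub]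
      have hfun : (fun i => lam i - (lam i + |lam i|)/2) = fun i => min (lam i) 0 := by
        funext i
        rcases le_or_gt 0 (lam i) with h | h
        · rw [min_eq_right h, abs_of_nonneg h]; ring
        · rw [min_eq_left h.le, abs_of_neg h]; ring
      rw [hfun]
    have hconjsym : ∀ d : Fin n → ℝ, (Z * Matrix.diagonal d * Zᵀ)ᵀ = Z * Matrix.diagonal d * Zᵀ := by
      intro d
      rw [Matrix.transpose_mul, Matrix.transpose_mul, Matrix.transpose_transpose,
        Matrix.diagonal_transpose, Matrix.mul_assoc]
    -- decomposition of A - P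
    have hAP : A - P = (B - P) + (A - B) := by abel
    have e1 : frobSq (A - P) = frobSq (B - P) + frobSq (A - B) := by
      rw [hAP]
      exact frobSq_add_of_sym_skew _ _ (by rw [hNfact]; exact hconjsym _) hCskew
    have e2 : frobSq (B - P) = ∑ i, (min (lam i) 0)^2 := by
      rw [hNfact, frobSq_conj _ _ hZ]
      simp [frobSq, Matrix.diagonal_apply, Finset.sum_ite_eq']
    -- decomposition of A - S
    have hSsym : Sᵀ = S := by rw [← Matrix.conjTranspose_eq_transpose_of_trivial]; exact hS.1
    have hAS : A - S = (B - S) + (A - B) := by abel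
    have e3 : frobSq (A - S) = frobSq (B - S) + frobSq (A - B) := by
      rw [hAS]
      refine frobSq_add_of_sym_skew _ _ ?_ hCskew
      rw [Matrix.transpose_sub, hBsym, hSsym]
    -- lower bound for frobSq (B - S)
    have hfact : B - S = Z * (Matrix.diagonal lam - Zᵀ * S * Z) * Zᵀ := by
      rw [Matrix.mul_sub, Matrix.sub_mul, ← hB]
      congr 1
      have hmid : Z * (Zᵀ * S * Z) * Zᵀ = S := by
        calc Z * (Zᵀ * S * Z) * Zᵀ = (Z * Zᵀ) * S * (Z * Zᵀ) := by noncomm_ring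
          _ = S := by rw [hZ]; simp
      exact hmid.symm
    have hSZ : (Zᵀ * S * Z).PosSemidef := by
      have := hS.mul_mul_conjTranspose_same Zᵀ
      rwa [Matrix.conjTranspose_eq_transpose_of_trivial, Matrix.transpose_transpose] at this
    have e4 : ∑ i, (min (lam i) 0)^2 ≤ frobSq (B - S) := by
      rw [hfact, frobSq_conj _ _ hZ]
      exact diag_bound lam _ hSZ
    have hCnn : 0 ≤ frobSq (A - B) := Finset.sum_nonneg fun i _ =>
      Finset.sum_nonneg fun j _ => sq_nonneg _
    apply Real.sqrt_le_sqrt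
    rw [e1, e2, e3]
    linarith
end

section
/- Let σ₁τ₁ ≥ 0. Then the symmetric tridiagonal Toeplitz matrix (n;1;(σ₁+τ₁)/2, δ, (σ₁+τ₁)/2) minimizes the Frobenius distance from T = (n;1;σ₁,δ,τ₁) over all normal tridiagonal Toeplitz matrices. -/
open Matrix Real Finset

lemma tri_apply (n : ℕ) (a d b : ℝ) (i j : Fin n) :
    triToeplitz n a d b i j =
      if (i : ℕ) = (j : ℕ) then d
      else if (i : ℕ) = (j : ℕ) + 1 then a
      else if (j : ℕ) = (i : ℕ) + 1 then b
      else 0 := by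
  simp only [triToeplitz, bandedToeplitz, Matrix.of_apply]
  split_ifs <;> first | rfl | omega

lemma tri_sub (n : ℕ) (a d b a' d' b' : ℝ) :
    triToeplitz n a d b - triToeplitz n a' d' b' =
      triToeplitz n (a - a') (d - d') (b - b') := by
  ext i j
  simp only [Matrix.sub_apply, tri_apply]
  split_ifs <;> ring

lemma tri_transpose (n : ℕ) (a d b : ℝ) :
    (triToeplitz n a d b)ᵀ = triToeplitz n b d a := by
  ext i j
  simp only [Matrix.transpose_apply, tri_apply]
  split_ifs <;> first | rfl | omega

lemma sum_two {n : ℕ} (hn : 2 ≤ n) (f : Fin n → ℝ) (c₀ c₁ : ℝ)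
    (hf : ∀ k : Fin n, f k = if (k : ℕ) = 0 then c₀ else if (k : ℕ) = 1 then c₁ else 0) :
    ∑ k, f k = c₀ + c₁ := by
  have h0 : (0 : ℕ) < n := by omega
  have h1 : (1 : ℕ) < n := by omega
  have : ∀ k : Fin n, f k =
      (if k = ⟨0, h0⟩ then c₀ else 0) + (if k = ⟨1, h1⟩ then c₁ else 0) := by
    intro k
    rw [hf k]
    simp only [Fin.ext_iff, Fin.val_mk]
    split_ifs <;> first | ring1 | (exfalso; omega)
  rw [Finset.sum_congr rfl (fun k _ => this k), Finset.sum_add_distrib,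
    Finset.sum_ite_eq' _ _ (fun _ => c₀), Finset.sum_ite_eq' _ _ (fun _ => c₁)]
  simp

lemma row_sum (n : ℕ) (a d b : ℝ) (i : Fin n) :
    ∑ j, (triToeplitz n a d b i j)^2 =
      d^2 + (if 1 ≤ (i : ℕ) then a^2 else 0) + (if (i : ℕ) + 1 < n then b^2 else 0) := by
  have key : ∀ j : Fin n, (triToeplitz n a d b i j)^2 =
      (if (j : ℕ) = (i : ℕ) then d^2 else 0)
      + (if 1 ≤ (i : ℕ) then (if (j : ℕ) = (i : ℕ) - 1 then a^2 else 0) else 0)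
      + (if (i : ℕ) + 1 < n then (if (j : ℕ) = (i : ℕ) + 1 then b^2 else 0) else 0) := by
    intro j
    rw [tri_apply]
    split_ifs <;> first | ring1 | (exfalso; omega)
  rw [Finset.sum_congr rfl (fun j _ => key j), Finset.sum_add_distrib,
    Finset.sum_add_distrib]
  congr 1
  · congr 1
    · have : ∀ j : Fin n, ((j : ℕ) = (i : ℕ)) ↔ j = i := by
        intro j; exact ⟨fun h => Fin.ext h, fun h => by rw [h]⟩
      simp_rw [this]
      rw [Finset.sum_ite_eq' _ _ (fun _ => d^2)]; simp
    · split_ifs with h1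
      · have hlt : (i : ℕ) - 1 < n := by omega
        have : ∀ j : Fin n, ((j : ℕ) = (i : ℕ) - 1) ↔ j = ⟨(i : ℕ) - 1, hlt⟩ := by
          intro j; constructor
          · intro h; exact Fin.ext h
          · intro h; rw [h]
        simp_rw [this]
        rw [Finset.sum_ite_eq' _ _ (fun _ => a^2)]; simp
      · simp
  · split_ifs with h1
    · have : ∀ j : Fin n, ((j : ℕ) = (i : ℕ) + 1) ↔ j = ⟨(i : ℕ) + 1, h1⟩ := by
        intro j; constructor
        · intro h; exact Fin.ext h
        · intro h; rw [h]
      simp_rw [this]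
      rw [Finset.sum_ite_eq' _ _ (fun _ => b^2)]; simp
    · simp

lemma frobSq_tri (n : ℕ) (a d b : ℝ) :
    frobSq (triToeplitz n a d b) = n * d^2 + (n - 1 : ℕ) * a^2 + (n - 1 : ℕ) * b^2 := by
  unfold frobSq
  rw [Finset.sum_congr rfl (fun i _ => row_sum n a d b i)]
  rw [Finset.sum_add_distrib, Finset.sum_add_distrib]
  congr 1
  · congr 1
    · simp [Finset.card_univ, mul_comm]
    · rw [Fin.sum_univ_eq_sum_range (fun i => if 1 ≤ i then a^2 else 0)]
      rw [Finset.sum_congr rfl (fun x hx => by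
        show (if 1 ≤ x then a^2 else 0) = (if x ∈ Finset.Ico 1 n then a^2 else 0)
        simp only [Finset.mem_range] at hx
        simp only [Finset.mem_Ico]
        congr 1
        simp only [eq_iff_iff]
        omega)]
      rw [Finset.sum_ite_mem, Finset.inter_eq_right.2
        (fun x hx => Finset.mem_range.2 (Finset.mem_Ico.1 hx).2)]
      simp [Nat.card_Ico, mul_comm]
  · rw [Fin.sum_univ_eq_sum_range (fun i => if i + 1 < n then b^2 else 0)]
    rw [Finset.sum_congr rfl (fun x hx => by
      show (if x + 1 < n then b^2 else 0) = (if x ∈ Finset.range (n-1) then b^2 else 0)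
      simp only [Finset.mem_range]
      congr 1
      simp only [eq_iff_iff]
      omega)]
    rw [Finset.sum_ite_mem, Finset.inter_eq_right.2
      (Finset.range_subset_range.2 (Nat.sub_le n 1))]
    simp [mul_comm]

/-- if `σ₁τ₁ ≥ 0`, the symmetric tridiagonal Toeplitz matrix
`(n;1;(σ₁+τ₁)/2,δ,(σ₁+τ₁)/2)` minimizes the Frobenius distance from
`T = (n;1;σ₁,δ,τ₁)` over all normal tridiagonal Toeplitz matrices. -/
theorem symmetric_minimizer_of_distance_to_normality {n : ℕ} (hn : 2 ≤ n)
    (σ₁ δ τ₁ : ℝ) (h : 0 ≤ σ₁ * τ₁) :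
    (triToeplitz n ((σ₁+τ₁)/2) δ ((σ₁+τ₁)/2) *
        (triToeplitz n ((σ₁+τ₁)/2) δ ((σ₁+τ₁)/2))ᵀ =
      (triToeplitz n ((σ₁+τ₁)/2) δ ((σ₁+τ₁)/2))ᵀ *
        triToeplitz n ((σ₁+τ₁)/2) δ ((σ₁+τ₁)/2)) ∧
    ∀ s t e : ℝ,
      triToeplitz n s e t * (triToeplitz n s e t)ᵀ =
        (triToeplitz n s e t)ᵀ * triToeplitz n s e t →
      Real.sqrt (frobSq (triToeplitz n σ₁ δ τ₁ -
          triToeplitz n ((σ₁+τ₁)/2) δ ((σ₁+τ₁)/2))) ≤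
        Real.sqrt (frobSq (triToeplitz n σ₁ δ τ₁ - triToeplitz n s e t)) := by
  constructor
  · rw [tri_transpose]
  · intro s t e hnorm
    have h0 : (0 : ℕ) < n := by omega
    set A := triToeplitz n s e t with hA
    have h00 := congrFun (congrFun hnorm ⟨0, h0⟩) ⟨0, h0⟩
    simp only [Matrix.mul_apply, Matrix.transpose_apply] at h00
    have hL : ∑ k, A ⟨0, h0⟩ k * A ⟨0, h0⟩ k = e^2 + t^2 := by
      apply sum_two hn _ (e^2) (t^2)
      intro k
      rw [hA, tri_apply]
      simp only [Fin.val_mk]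
      split_ifs <;> first | ring1 | (exfalso; omega) | exact absurd trivial (by assumption : ¬_) | exact (by assumption : False).elim
    have hR : ∑ k, A k ⟨0, h0⟩ * A k ⟨0, h0⟩ = e^2 + s^2 := by
      apply sum_two hn _ (e^2) (s^2)
      intro k
      rw [hA, tri_apply]
      simp only [Fin.val_mk]
      split_ifs <;> first | ring1 | (exfalso; omega) | exact absurd trivial (by assumption : ¬_) | exact (by assumption : False).elim
    rw [hL, hR] at h00
    have hst : t^2 = s^2 := by linarith
    have key : (σ₁-(σ₁+τ₁)/2)^2 + (τ₁-(σ₁+τ₁)/2)^2 ≤ (σ₁-s)^2 + (τ₁-t)^2 := by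
      have hpq : (s+t)*(s-t) = 0 := by nlinarith [hst]
      rcases mul_eq_zero.1 hpq with hp | hq
      · have ht : t = -s := by linarith
        subst ht
        nlinarith [sq_nonneg (σ₁ - τ₁ - 2*s), h]
      · have ht : t = s := by linarith
        rw [ht]
        nlinarith [sq_nonneg (σ₁ + τ₁ - 2*s)]
    apply Real.sqrt_le_sqrt
    rw [tri_sub, tri_sub, frobSq_tri, frobSq_tri]
    have hm : (0:ℝ) ≤ ((n-1 : ℕ) : ℝ) := Nat.cast_nonneg _
    have hd : (0:ℝ) ≤ (n : ℝ) * (δ - e)^2 :=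
      mul_nonneg (Nat.cast_nonneg _) (sq_nonneg _)
    nlinarith [mul_le_mul_of_nonneg_left key hm, hd]
end

section
/- Let T = (n;k;σ,δ,τ) with δ ≤ 0. Then the squared (2k+1)-banded Toeplitz structured Frobenius distance from T to the set of symmetric positive semidefinite (2k+1)-banded Toeplitz matrices is at most min{ Σ_{i=1}^{k} (n−i)(σ_i² + τ_i²) + nδ², n·(Σ_{i=1}^{k}|σ_i+τ_i| − δ)² + Σ_{i=1}^{k} ((n−i)/2)(σ_i−τ_i)² }. -/
open Matrix Real Finset

lemma sum_ite_val_eq (n m : ℕ) (c : ℝ) :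
    ∑ j : Fin n, (if (j:ℕ) = m then c else 0) = if m < n then c else 0 := by
  rw [Fin.sum_univ_eq_sum_range (fun j => if j = m then c else 0)]
  rw [Finset.sum_ite_eq' (Finset.range n) m (fun _ => c)]
  simp [Finset.mem_range]

lemma sum_ite_val_lt (n m : ℕ) (c : ℝ) :
    ∑ j : Fin n, (if (j:ℕ) < m then c else 0) = (min m n : ℕ) * c := by
  rw [Fin.sum_univ_eq_sum_range (fun j => if j < m then c else 0)]
  have : ∀ j ∈ Finset.range n, (if j < m then c else 0) = (if j ∈ Finset.range m then c else 0) := by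
    intro j _; simp [Finset.mem_range]
  rw [Finset.sum_congr rfl this, Finset.sum_ite_mem]
  have : Finset.range n ∩ Finset.range m = Finset.range (min m n) := by
    ext x; simp [Finset.mem_range]; omega
  rw [this, Finset.sum_const, Finset.card_range, nsmul_eq_mul]

lemma count_sub (n d : ℕ) (hd : d ≤ n) (c : ℝ) :
    ∑ i : Fin n, ∑ j : Fin n, (if (j:ℕ) + d = (i:ℕ) then c else 0) = ((n:ℝ) - d) * c := by
  rw [Finset.sum_comm]
  have h1 : ∀ j : Fin n, ∑ i : Fin n, (if (j:ℕ) + d = (i:ℕ) then c else 0)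
      = if (j:ℕ) < n - d then c else 0 := by
    intro j
    have : ∀ i : Fin n, (if (j:ℕ) + d = (i:ℕ) then c else 0) = (if (i:ℕ) = (j:ℕ) + d then c else 0) := by
      intro i; congr 1; simp [eq_comm]
    rw [Finset.sum_congr rfl (fun i _ => this i), sum_ite_val_eq]
    congr 1; simp; omega
  rw [Finset.sum_congr rfl (fun j _ => h1 j), sum_ite_val_lt]
  have : min (n - d) n = n - d := by omega
  rw [this]
  push_cast [Nat.cast_sub hd]
  ring

lemma entry_decomp {n : ℕ} (k : ℕ) (σ τ : ℕ → ℝ) (δ : ℝ) (f : ℝ → ℝ) (hf0 : f 0 = 0)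
    (i j : Fin n) (hij : (i:ℕ) ≠ (j:ℕ)) :
    f (bandedToeplitz n k σ τ δ i j) =
      ∑ d ∈ Finset.Icc 1 k, ((if (j:ℕ) + d = (i:ℕ) then f (σ d) else 0) +
        (if (i:ℕ) + d = (j:ℕ) then f (τ d) else 0)) := by
  rcases lt_or_gt_of_ne hij with h | h
  · -- i < j : superdiagonal
    have e1 : ∀ d : ℕ, ((j:ℕ) + d = (i:ℕ)) = False := by intro d; simp; omega
    have e2 : ∀ d : ℕ, ((i:ℕ) + d = (j:ℕ)) = (d = (j:ℕ) - (i:ℕ)) := by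
      intro d; simp only [eq_iff_iff]; omega
    simp only [e1, e2, if_false, zero_add]
    rw [Finset.sum_ite_eq' (Finset.Icc 1 k) ((j:ℕ) - (i:ℕ)) (fun d => f (τ d))]
    by_cases hb : (j:ℕ) - (i:ℕ) ≤ k
    · have hmem : (j:ℕ) - (i:ℕ) ∈ Finset.Icc 1 k := by simp [Finset.mem_Icc]; omega
      rw [if_pos hmem]
      simp only [bandedToeplitz, Matrix.of_apply]
      rw [if_neg hij, if_neg (by omega), if_pos ⟨h, hb⟩]
    · have hmem : (j:ℕ) - (i:ℕ) ∉ Finset.Icc 1 k := by simp [Finset.mem_Icc]; omega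
      rw [if_neg hmem]
      simp only [bandedToeplitz, Matrix.of_apply]
      rw [if_neg hij, if_neg (by omega), if_neg (by omega)]
      exact hf0
  · -- j < i : subdiagonal
    have e1 : ∀ d : ℕ, ((i:ℕ) + d = (j:ℕ)) = False := by intro d; simp; omega
    have e2 : ∀ d : ℕ, ((j:ℕ) + d = (i:ℕ)) = (d = (i:ℕ) - (j:ℕ)) := by
      intro d; simp only [eq_iff_iff]; omega
    simp only [e1, e2, if_false, add_zero]
    rw [Finset.sum_ite_eq' (Finset.Icc 1 k) ((i:ℕ) - (j:ℕ)) (fun d => f (σ d))]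
    by_cases hb : (i:ℕ) - (j:ℕ) ≤ k
    · have hmem : (i:ℕ) - (j:ℕ) ∈ Finset.Icc 1 k := by simp [Finset.mem_Icc]; omega
      rw [if_pos hmem]
      simp only [bandedToeplitz, Matrix.of_apply]
      rw [if_neg hij, if_pos ⟨h, hb⟩]
    · have hmem : (i:ℕ) - (j:ℕ) ∉ Finset.Icc 1 k := by simp [Finset.mem_Icc]; omega
      rw [if_neg hmem]
      simp only [bandedToeplitz, Matrix.of_apply]
      rw [if_neg hij, if_neg (by omega), if_neg (by omega)]
      exact hf0

lemma entry_sq {n : ℕ} (k : ℕ) (σ τ : ℕ → ℝ) (δ : ℝ) (i j : Fin n) :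
    (bandedToeplitz n k σ τ δ i j)^2 =
      (if (i:ℕ) = (j:ℕ) then δ^2 else 0) +
      ∑ d ∈ Finset.Icc 1 k, ((if (j:ℕ) + d = (i:ℕ) then (σ d)^2 else 0) +
        (if (i:ℕ) + d = (j:ℕ) then (τ d)^2 else 0)) := by
  by_cases h : (i:ℕ) = (j:ℕ)
  · have e1 : ∀ d ∈ Finset.Icc 1 k, ((if (j:ℕ) + d = (i:ℕ) then (σ d)^2 else 0) +
        (if (i:ℕ) + d = (j:ℕ) then (τ d)^2 else 0)) = 0 := by
      intro d hd
      simp only [Finset.mem_Icc] at hd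
      rw [if_neg (by omega), if_neg (by omega), add_zero]
    rw [if_pos h, Finset.sum_congr rfl e1, Finset.sum_const, smul_zero, add_zero]
    simp [bandedToeplitz, h]
  · rw [if_neg h, zero_add]
    exact entry_decomp k σ τ δ (fun x => x^2) (by norm_num) i j h

lemma frobSq_banded {n : ℕ} (k : ℕ) (hk : k ≤ n) (σ τ : ℕ → ℝ) (δ : ℝ) :
    frobSq (bandedToeplitz n k σ τ δ) =
      (n:ℝ) * δ^2 + ∑ d ∈ Finset.Icc 1 k, ((n:ℝ) - d) * ((σ d)^2 + (τ d)^2) := by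
  unfold frobSq
  simp_rw [entry_sq k σ τ δ, Finset.sum_add_distrib]
  congr 1
  · -- diagonal part
    have h1 : ∀ i : Fin n, ∑ j : Fin n, (if (i:ℕ) = (j:ℕ) then δ^2 else 0) = δ^2 := by
      intro i
      have : ∀ j : Fin n, (if (i:ℕ) = (j:ℕ) then δ^2 else 0) = (if (j:ℕ) = (i:ℕ) then δ^2 else 0) := by
        intro j; congr 1; simp [eq_comm]
      rw [Finset.sum_congr rfl (fun j _ => this j), sum_ite_val_eq n (i:ℕ) (δ^2)]
      exact if_pos i.isLt
    rw [Finset.sum_congr rfl (fun i _ => h1 i), Finset.sum_const, Finset.card_univ,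
      Fintype.card_fin, nsmul_eq_mul]
  · -- band part

    have hswap : ∀ (F : Fin n → Fin n → ℕ → ℝ),
        (∑ i : Fin n, ∑ j : Fin n, ∑ d ∈ Finset.Icc 1 k, F i j d)
          = ∑ d ∈ Finset.Icc 1 k, ∑ i : Fin n, ∑ j : Fin n, F i j d := by
      intro F
      rw [Finset.sum_congr rfl (fun i _ => Finset.sum_comm), Finset.sum_comm]
    rw [hswap, hswap, ← Finset.sum_add_distrib]
    apply Finset.sum_congr rfl
    intro d hd
    have hdn : d ≤ n := le_trans (Finset.mem_Icc.mp hd).2 hk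
    rw [count_sub n d hdn ((σ d)^2), Finset.sum_comm, count_sub n d hdn ((τ d)^2)]
    ring

lemma banded_sub {n k : ℕ} (σ τ s t : ℕ → ℝ) (δ dd : ℝ) :
    bandedToeplitz n k σ τ δ - bandedToeplitz n k s t dd =
      bandedToeplitz n k (fun d => σ d - s d) (fun d => τ d - t d) (δ - dd) := by
  ext i j
  simp only [Matrix.sub_apply, bandedToeplitz, Matrix.of_apply]
  split_ifs <;> ring

lemma banded_zero (n k : ℕ) :
    bandedToeplitz n k (fun _ => (0:ℝ)) (fun _ => 0) 0 = 0 := by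
  ext i j
  simp only [bandedToeplitz, Matrix.of_apply, Matrix.zero_apply]
  split_ifs <;> rfl

lemma banded_isHermitian (n k : ℕ) (s : ℕ → ℝ) (dd : ℝ) :
    (bandedToeplitz n k s s dd).IsHermitian := by
  rw [Matrix.IsHermitian]
  ext i j
  simp only [Matrix.conjTranspose_apply, bandedToeplitz, Matrix.of_apply, star_trivial]
  split_ifs <;> first | rfl | (exfalso; omega)

lemma sum_if_le {n : ℕ} (P : Fin n → Prop) [DecidablePred P]
    (hu : ∀ a b, P a → P b → a = b) (c : ℝ) (hc : 0 ≤ c) :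
    ∑ j : Fin n, (if P j then c else 0) ≤ c := by
  classical
  rw [Finset.sum_ite, Finset.sum_const_zero, add_zero, Finset.sum_const, nsmul_eq_mul]
  have hcard : (Finset.univ.filter P).card ≤ 1 := by
    apply Finset.card_le_one.mpr
    intro a ha b hb
    exact hu a b (Finset.mem_filter.mp ha).2 (Finset.mem_filter.mp hb).2
  have h1 : ((Finset.univ.filter P).card : ℝ) ≤ 1 := by exact_mod_cast hcard
  nlinarith

lemma banded_posSemidef (n k : ℕ) (s : ℕ → ℝ) (dd : ℝ)
    (hdd : ∑ d ∈ Finset.Icc 1 k, 2 * |s d| ≤ dd) :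
    (bandedToeplitz n k s s dd).PosSemidef := by
  have hH : (bandedToeplitz n k s s dd).IsHermitian := banded_isHermitian n k s dd
  apply (Matrix.IsHermitian.posSemidef_iff_eigenvalues_nonneg hH).mpr
  intro i
  show (0:ℝ) ≤ hH.eigenvalues i
  have hv := hH.mulVec_eigenvectorBasis i
  have hne : (hH.eigenvectorBasis i) ≠ 0 := hH.eigenvectorBasis.orthonormal.ne_zero i
  have hev : Module.End.HasEigenvalue (Matrix.toLin' (bandedToeplitz n k s s dd))
      ((hH.eigenvalues i : ℝ)) := by
    apply Module.End.hasEigenvalue_of_hasEigenvector (x := ⇑(hH.eigenvectorBasis i))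
    constructor
    · rw [Module.End.mem_eigenspace_iff, Matrix.toLin'_apply, hv]
    · intro h0
      apply hne
      ext x
      exact congrFun h0 x
  obtain ⟨r, hr⟩ := eigenvalue_mem_ball hev
  rw [Metric.mem_closedBall, Real.dist_eq] at hr
  have hdiag : bandedToeplitz n k s s dd r r = dd := by simp [bandedToeplitz]
  have hrad : ∑ j ∈ Finset.univ.erase r, ‖bandedToeplitz n k s s dd r j‖ ≤ dd := by
    set G : Fin n → ℝ := fun j => ∑ d ∈ Finset.Icc 1 k,
      ((if (j:ℕ) + d = (r:ℕ) then |s d| else 0) + (if (r:ℕ) + d = (j:ℕ) then |s d| else 0))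
      with hG
    have step1 : ∑ j ∈ Finset.univ.erase r, ‖bandedToeplitz n k s s dd r j‖
        ≤ ∑ j ∈ Finset.univ.erase r, G j := by
      apply Finset.sum_le_sum
      intro j hj
      have hjr : (r:ℕ) ≠ (j:ℕ) := by
        intro h; exact (Finset.mem_erase.mp hj).1 (Fin.ext h.symm)
      rw [Real.norm_eq_abs, entry_decomp k s s dd (fun x => |x|) (abs_zero) r j hjr]
    have step2 : ∑ j ∈ Finset.univ.erase r, G j ≤ ∑ j : Fin n, G j := by
      apply Finset.sum_le_sum_of_subset_of_nonneg (Finset.subset_univ _)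
      intro j _ _
      apply Finset.sum_nonneg
      intro d _
      positivity
    have step3 : ∑ j : Fin n, G j ≤ ∑ d ∈ Finset.Icc 1 k, 2 * |s d| := by
      rw [hG, Finset.sum_comm]
      apply Finset.sum_le_sum
      intro d hd
      rw [Finset.sum_add_distrib]
      have b1 : ∑ j : Fin n, (if (j:ℕ) + d = (r:ℕ) then |s d| else 0) ≤ |s d| := by
        apply sum_if_le _ _ _ (abs_nonneg _)
        intro a b ha hb; exact Fin.ext (by omega)
      have b2 : ∑ j : Fin n, (if (r:ℕ) + d = (j:ℕ) then |s d| else 0) ≤ |s d| := by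
        apply sum_if_le _ _ _ (abs_nonneg _)
        intro a b ha hb; exact Fin.ext (by omega)
      linarith
    linarith
  rw [hdiag] at hr
  have habs := abs_le.mp (hr.trans hrad)
  linarith [habs.1]


/-- for `δ ≤ 0`, an upper bound on the squared banded-Toeplitz
structured Frobenius distance from `T = (n;k;σ,δ,τ)` to the symmetric positive
semidefinite (2k+1)-banded Toeplitz matrices. -/
theorem structured_dist_upper_bound_nonpos_delta {n k : ℕ} (hk : k ≤ n)
    (σ τ : ℕ → ℝ) (δ : ℝ) (hδ : δ ≤ 0) :
    sInf {d : ℝ | ∃ s t : ℕ → ℝ, ∃ dd : ℝ,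
        (bandedToeplitz n k s t dd).PosSemidef ∧
        d = frobSq (bandedToeplitz n k σ τ δ - bandedToeplitz n k s t dd)} ≤
      min ((∑ i ∈ Finset.Icc 1 k, ((n : ℝ) - i) * ((σ i)^2 + (τ i)^2)) + n * δ^2)
        ((n : ℝ) * ((∑ i ∈ Finset.Icc 1 k, |σ i + τ i|) - δ)^2 +
          ∑ i ∈ Finset.Icc 1 k, (((n : ℝ) - i)/2) * (σ i - τ i)^2) := by
  set SetD := {d : ℝ | ∃ s t : ℕ → ℝ, ∃ dd : ℝ,
        (bandedToeplitz n k s t dd).PosSemidef ∧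
        d = frobSq (bandedToeplitz n k σ τ δ - bandedToeplitz n k s t dd)} with hSetD
  have hbdd : BddBelow SetD := by
    refine ⟨0, ?_⟩
    rintro d ⟨s, t, dd, _, rfl⟩
    apply Finset.sum_nonneg
    intro i _
    apply Finset.sum_nonneg
    intro j _
    positivity
  apply le_min
  · -- candidate S = 0
    apply csInf_le hbdd
    refine ⟨fun _ => 0, fun _ => 0, 0, ?_, ?_⟩
    · rw [banded_zero]
      exact Matrix.PosSemidef.zero
    · rw [banded_sub, frobSq_banded k hk]
      simp only [sub_zero]
      ring
  · -- candidate S = symmetrized + shifted diagonal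
    apply csInf_le hbdd
    set s : ℕ → ℝ := fun d => (σ d + τ d) / 2 with hs
    set dd : ℝ := ∑ d ∈ Finset.Icc 1 k, |σ d + τ d| with hdd
    refine ⟨s, s, dd, ?_, ?_⟩
    · apply banded_posSemidef
      apply le_of_eq
      apply Finset.sum_congr rfl
      intro d _
      rw [hs]
      rw [abs_div, abs_two]
      ring
    · rw [banded_sub, frobSq_banded k hk]
      have h2 : ∀ d ∈ Finset.Icc 1 k,
          ((n:ℝ) - d) * ((σ d - s d)^2 + (τ d - s d)^2)
            = ((n:ℝ) - d)/2 * (σ d - τ d)^2 := by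
        intro d _
        rw [hs]
        ring
      rw [Finset.sum_congr rfl h2]
      have h1 : (n:ℝ) * (dd - δ)^2 = (n:ℝ) * (δ - dd)^2 := by ring
      rw [h1]
end

section
/- Let T₁* = (n;1;(σ₁+τ₁)/2, 0, (σ₁+τ₁)/2) be the symmetric tridiagonal Toeplitz matrix with zero diagonal. Its eigenvalues are |σ₁+τ₁|·cos(iπ/(n+1)), i=1,...,n, and its squared Frobenius distance to the set of symmetric positive semidefinite matrices equals (1/2)‖T₁*‖_F² = ((n−1)/4)(σ₁+τ₁)². -/
open Matrix Real Finset

section AuxLemmas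
variable {n : ℕ}

lemma aux_trace_conj (U V A : Matrix (Fin n) (Fin n) ℝ) (h : V * U = 1) :
    trace (U * A * V) = trace A := by rw [trace_mul_cycle, h, one_mul]

lemma aux_det_conj (U V A : Matrix (Fin n) (Fin n) ℝ) (h : V * U = 1) :
    det (U * A * V) = det A := by
  have h2 : V.det * U.det = 1 := by rw [← det_mul, h, det_one]
  rw [det_mul, det_mul, show U.det * A.det * V.det = V.det * U.det * A.det by ring, h2, one_mul]

lemma aux_frobSq_trace (A : Matrix (Fin n) (Fin n) ℝ) : frobSq A = trace (Aᵀ * A) := by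
  simp only [frobSq, Matrix.trace, Matrix.diag, Matrix.mul_apply, Matrix.transpose_apply, sq]
  exact Finset.sum_comm

lemma aux_perm (f g : Fin n → ℝ) (hg : Function.Injective g)
    (h : ∀ j, ∃ i, f i = g j) : ∃ e : Equiv.Perm (Fin n), ∀ j, f (e j) = g j := by
  choose F hF using h
  have hFinj : Function.Injective F := fun a b hab => hg (by rw [← hF a, ← hF b, hab])
  exact ⟨Equiv.ofBijective F ((Finite.injective_iff_bijective).mp hFinj), fun j => hF j⟩

lemma aux_tri_apply (c : ℝ) (i j : Fin n) :
    triToeplitz n c 0 c i j = if (i:ℕ) = (j:ℕ)+1 ∨ (j:ℕ) = (i:ℕ)+1 then c else 0 := by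
  show bandedToeplitz n 1 _ _ _ i j = _
  unfold bandedToeplitz
  simp only [of_apply]
  split_ifs <;> first | rfl | omega

lemma aux_trig (a b : ℝ) : Real.sin (a - b) + Real.sin (a + b) = 2 * Real.cos b * Real.sin a := by
  rw [Real.sin_sub, Real.sin_add]; ring

lemma aux_maxsq (a : ℝ) : max 0 (-a) ^ 2 + max 0 a ^ 2 = a ^ 2 := by
  rcases le_total a 0 with h | h
  · rw [max_eq_right (neg_nonneg.mpr h), max_eq_left h]; ring
  · rw [max_eq_left (neg_nonpos.mpr h), max_eq_right h]; ring

lemma aux_diag_nonneg {M : Matrix (Fin n) (Fin n) ℝ} (hM : M.PosSemidef) (i : Fin n) :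
    0 ≤ M i i := by
  exact hM.diag_nonneg

lemma aux_card_filter₁ (hn : 1 ≤ n) :
    ((Finset.range n).filter (fun m => 1 ≤ m)).card = n - 1 := by
  have : (Finset.range n).filter (fun m => 1 ≤ m) = Finset.Ico 1 n := by
    ext m; simp; omega
  rw [this, Nat.card_Ico]

lemma aux_card_filter₂ (hn : 1 ≤ n) :
    ((Finset.range n).filter (fun m => m + 1 < n)).card = n - 1 := by
  have : (Finset.range n).filter (fun m => m + 1 < n) = Finset.Ico 0 (n-1) := by
    ext m; simp; omega
  rw [this, Nat.card_Ico]; omega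

end AuxLemmas

/-- for `T₁* = (n;1;(σ₁+τ₁)/2,0,(σ₁+τ₁)/2)`, the eigenvalues are
`|σ₁+τ₁|·cos(iπ/(n+1))`, and the squared Frobenius distance to the symmetric
positive semidefinite matrices equals `(1/2)‖T₁*‖_F² = ((n−1)/4)(σ₁+τ₁)²`. -/
theorem zero_diag_symmetric_tridiag_dist {n : ℕ} (hn : 1 ≤ n) (σ₁ τ₁ : ℝ)
    (hT : (triToeplitz n ((σ₁+τ₁)/2) 0 ((σ₁+τ₁)/2)).IsHermitian) :
    (∃ e : Equiv.Perm (Fin n), ∀ i : Fin n,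
      hT.eigenvalues (e i) =
        |σ₁ + τ₁| * Real.cos (((i : ℕ) + 1) * Real.pi / ((n : ℝ) + 1))) ∧
    sInf {d : ℝ | ∃ E : Matrix (Fin n) (Fin n) ℝ,
        (triToeplitz n ((σ₁+τ₁)/2) 0 ((σ₁+τ₁)/2) + E).PosSemidef ∧ d = frobSq E} =
      (((n : ℝ) - 1)/4) * (σ₁ + τ₁)^2 ∧
    (1/2 : ℝ) * frobSq (triToeplitz n ((σ₁+τ₁)/2) 0 ((σ₁+τ₁)/2)) =
      (((n : ℝ) - 1)/4) * (σ₁ + τ₁)^2 := by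
  set c : ℝ := (σ₁+τ₁)/2 with hcdef
  set T : Matrix (Fin n) (Fin n) ℝ := triToeplitz n c 0 c with hTdef
  set lam : Fin n → ℝ := hT.eigenvalues with hlam
  set U : Matrix (Fin n) (Fin n) ℝ := (hT.eigenvectorUnitary : Matrix (Fin n) (Fin n) ℝ) with hUdef
  set V : Matrix (Fin n) (Fin n) ℝ :=
    star (hT.eigenvectorUnitary : Matrix (Fin n) (Fin n) ℝ) with hVdef
  have hUV : U * V = 1 := (Matrix.mem_unitaryGroup_iff).mp hT.eigenvectorUnitary.2
  have hVU : V * U = 1 := (Matrix.mem_unitaryGroup_iff').mp hT.eigenvectorUnitary.2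
  have hspec : T = U * diagonal lam * V := by
    have h := hT.spectral_theorem
    rwa [show (RCLike.ofReal ∘ hT.eigenvalues : Fin n → ℝ) = lam from funext fun i => rfl] at h
  have hn1 : (0:ℝ) < (n:ℝ) + 1 := by positivity
  have key : ∀ j : Fin n, ∃ i : Fin n,
      lam i = 2*c*Real.cos ((((j:ℕ):ℝ)+1) * π / ((n:ℝ)+1)) := by
    intro j
    set θ : ℝ := (((j:ℕ):ℝ)+1) * π / ((n:ℝ)+1) with hθ
    set μ : ℝ := 2*c*Real.cos θ with hμ
    set v : Fin n → ℝ := fun k => Real.sin ((((k:ℕ):ℝ)+1) * θ) with hv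
    have hmul : T *ᵥ v = μ • v := by
      funext k
      have hsplit : ∀ i : Fin n, T k i * v i =
          (if (k:ℕ) = (i:ℕ)+1 then c * Real.sin (((k:ℕ):ℝ) * θ) else 0)
        + (if (i:ℕ) = (k:ℕ)+1 then c * Real.sin ((((k:ℕ):ℝ)+2) * θ) else 0) := by
        intro i
        rw [hTdef, aux_tri_apply]
        by_cases h1 : (k:ℕ) = (i:ℕ)+1
        · have h2 : ¬ ((i:ℕ) = (k:ℕ)+1) := by omega
          have h3 : (((i:ℕ):ℝ)+1) = ((k:ℕ):ℝ) := by exact_mod_cast h1.symm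
          rw [if_pos (Or.inl h1), if_pos h1, if_neg h2, add_zero, hv]
          dsimp only
          rw [h3]
        · by_cases h2 : (i:ℕ) = (k:ℕ)+1
          · have h3 : (((i:ℕ):ℝ)+1) = ((k:ℕ):ℝ)+2 := by
              have : ((i:ℕ)+1 : ℕ) = ((k:ℕ)+2 : ℕ) := by omega
              exact_mod_cast this
            rw [if_pos (Or.inr h2), if_neg h1, if_pos h2, zero_add, hv]
            dsimp only
            rw [h3]
          · rw [if_neg (by tauto), if_neg h1, if_neg h2, add_zero, zero_mul]
      have hrow : (T *ᵥ v) k =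
          (∑ i : Fin n, if (k:ℕ) = (i:ℕ)+1 then c * Real.sin (((k:ℕ):ℝ) * θ) else 0)
        + (∑ i : Fin n, if (i:ℕ) = (k:ℕ)+1 then c * Real.sin ((((k:ℕ):ℝ)+2) * θ) else 0) := by
        simp only [Matrix.mulVec, dotProduct]
        rw [← Finset.sum_add_distrib]
        exact Finset.sum_congr rfl (fun i _ => hsplit i)
      have hS1 : (∑ i : Fin n, if (k:ℕ) = (i:ℕ)+1 then c * Real.sin (((k:ℕ):ℝ) * θ) else 0)
          = c * Real.sin (((k:ℕ):ℝ) * θ) := by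
        by_cases hk : (k:ℕ) = 0
        · rw [Finset.sum_eq_zero (fun i _ => if_neg (by omega))]
          have : ((k:ℕ):ℝ) = 0 := by exact_mod_cast hk
          rw [this, zero_mul, Real.sin_zero, mul_zero]
        · have hk1 : (k:ℕ) - 1 < n := by have := k.isLt; omega
          rw [Finset.sum_eq_single (⟨(k:ℕ)-1, hk1⟩ : Fin n)]
          · exact if_pos (by simp; omega)
          · intro b _ hb
            exact if_neg (fun hh => hb (Fin.ext (show (b:ℕ) = (k:ℕ)-1 by omega)))
          · intro h; exact absurd (Finset.mem_univ _) h
      have hS2 : (∑ i : Fin n, if (i:ℕ) = (k:ℕ)+1 then c * Real.sin ((((k:ℕ):ℝ)+2) * θ) else 0)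
          = c * Real.sin ((((k:ℕ):ℝ)+2) * θ) := by
        by_cases hk : (k:ℕ)+1 < n
        · rw [Finset.sum_eq_single (⟨(k:ℕ)+1, hk⟩ : Fin n)]
          · exact if_pos (by simp)
          · intro b _ hb
            exact if_neg (fun hh => hb (Fin.ext (show (b:ℕ) = (k:ℕ)+1 from hh)))
          · intro h; exact absurd (Finset.mem_univ _) h
        · rw [Finset.sum_eq_zero (fun i _ => if_neg (by have := i.isLt; omega))]
          have hcast : ((k:ℕ):ℝ) + 2 = ((n:ℕ):ℝ) + 1 := by
            have hk2 : (k:ℕ) + 2 = n + 1 := by have := k.isLt; omega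
            exact_mod_cast congrArg (Nat.cast : ℕ → ℝ) hk2
          rw [hcast, hθ]
          have harg : ((n:ℝ)+1) * ((((j:ℕ):ℝ)+1) * π / ((n:ℝ)+1)) = (((j:ℕ)+1 : ℕ):ℝ) * π := by
            push_cast
            field_simp
          rw [harg, Real.sin_nat_mul_pi, mul_zero]
      have harg1 : ((k:ℕ):ℝ) * θ = (((k:ℕ):ℝ)+1)*θ - θ := by ring
      have harg2 : (((k:ℕ):ℝ)+2) * θ = (((k:ℕ):ℝ)+1)*θ + θ := by ring
      rw [hrow, hS1, hS2, harg1, harg2, ← mul_add, aux_trig]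
      have hrhs : (μ • v) k = μ * Real.sin ((((k:ℕ):ℝ)+1) * θ) := rfl
      rw [hrhs, hμ]
      ring
    have hθpos : 0 < θ := by
      rw [hθ]
      have := Real.pi_pos
      positivity
    have hθlt : θ < π := by
      rw [hθ, div_lt_iff₀ hn1]
      have hj : ((j:ℕ):ℝ) + 1 < (n:ℝ)+1 := by exact_mod_cast Nat.add_lt_add_right j.isLt 1
      nlinarith [Real.pi_pos]
    have hvne : v ≠ 0 := by
      intro h0
      have h1 := congrFun h0 (⟨0, hn⟩ : Fin n)
      rw [hv] at h1
      simp only [Fin.val_mk, Nat.cast_zero, zero_add, one_mul, Pi.zero_apply] at h1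
      exact absurd h1 (ne_of_gt (Real.sin_pos_of_pos_of_lt_pi hθpos hθlt))
    have hdet0 : (T - μ • 1).det = 0 := by
      apply (Matrix.exists_mulVec_eq_zero_iff).mp
      exact ⟨v, hvne, by
        rw [Matrix.sub_mulVec, hmul, Matrix.smul_mulVec, Matrix.one_mulVec, sub_self]⟩
    have hdet1 : (T - μ • 1).det = ∏ i, (lam i - μ) := by
      have h1 : T - μ • 1 = U * diagonal (fun i => lam i - μ) * V := by
        have h2 : (μ • (1:Matrix (Fin n) (Fin n) ℝ)) = U * (μ • 1) * V := by
          rw [Matrix.mul_smul, Matrix.smul_mul, mul_one, hUV]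
        have h3 : U * (diagonal lam - μ • 1) * V
            = U * diagonal lam * V - U * (μ • 1) * V := by
          rw [Matrix.mul_sub, Matrix.sub_mul]
        rw [hspec, h2, ← h3, Matrix.smul_one_eq_diagonal, Matrix.diagonal_sub]
      rw [h1, aux_det_conj _ _ _ hVU, Matrix.det_diagonal]
    rw [hdet0] at hdet1
    obtain ⟨i, _, hi⟩ := Finset.prod_eq_zero_iff.mp hdet1.symm
    exact ⟨i, by linarith [sub_eq_zero.mp hi]⟩
  have hrev : ∀ j : Fin n, ((((j.rev :ℕ):ℝ)+1) * π / ((n:ℝ)+1))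
      = π - ((((j:ℕ):ℝ)+1) * π / ((n:ℝ)+1)) := by
    intro j
    have hj : (j:ℕ) + 1 ≤ n := j.isLt
    have h1 : ((j.rev : ℕ):ℝ) = (n:ℝ) - ((j:ℕ):ℝ) - 1 := by
      rw [Fin.val_rev]
      push_cast [Nat.cast_sub hj]
      ring
    rw [h1]
    field_simp
    ring
  have hcosrev : ∀ j : Fin n, Real.cos ((((j.rev :ℕ):ℝ)+1) * π / ((n:ℝ)+1))
      = - Real.cos ((((j:ℕ):ℝ)+1) * π / ((n:ℝ)+1)) := by
    intro j; rw [hrev, Real.cos_pi_sub]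
  have h2c : σ₁ + τ₁ = 2 * c := by rw [hcdef]; ring
  have part1 : ∃ e : Equiv.Perm (Fin n), ∀ i : Fin n,
      lam (e i) = |σ₁ + τ₁| * Real.cos ((((i:ℕ):ℝ) + 1) * π / ((n : ℝ) + 1)) := by
    by_cases hc0 : c = 0
    · have hT0 : T = 0 := by
        ext i j
        rw [hTdef, aux_tri_apply]
        split_ifs <;> simp [hc0]
      have hdiagT : diagonal lam = V * T * U := by
        rw [hspec]
        have h4 : V * (U * diagonal lam * V) * U = (V * U) * diagonal lam * (V * U) := by
          noncomm_ring
        rw [h4, hVU, one_mul, mul_one]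
      have hlam0 : ∀ i, lam i = 0 := by
        intro i
        have h0 : diagonal lam = 0 := by rw [hdiagT, hT0, Matrix.mul_zero, Matrix.zero_mul]
        have h1 : (diagonal lam) i i = (0 : Matrix (Fin n) (Fin n) ℝ) i i := by rw [h0]
        simpa [Matrix.diagonal_apply_eq] using h1
      have habs : |σ₁ + τ₁| = 0 := by
        rw [abs_eq_zero, h2c, hc0]; ring
      exact ⟨Equiv.refl _, fun i => by rw [Equiv.refl_apply, hlam0, habs, zero_mul]⟩
    · set g : Fin n → ℝ := fun j => |σ₁ + τ₁| * Real.cos ((((j:ℕ):ℝ)+1) * π / ((n:ℝ)+1)) with hg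
      have habs : |σ₁ + τ₁| ≠ 0 := by
        rw [abs_ne_zero, h2c]
        intro h; apply hc0; linarith
      have hθmem : ∀ j : Fin n, (((j:ℕ):ℝ)+1) * π / ((n:ℝ)+1) ∈ Set.Icc 0 π := by
        intro j
        have hπ := Real.pi_pos
        constructor
        · positivity
        · rw [div_le_iff₀ hn1]
          have hj : ((j:ℕ):ℝ) + 1 ≤ (n:ℝ) := by exact_mod_cast j.isLt
          nlinarith
      have hginj : Function.Injective g := by
        intro a b hab
        rw [hg] at hab
        dsimp only at hab
        have h1 := mul_left_cancel₀ habs hab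
        have h2 := Real.injOn_cos (hθmem a) (hθmem b) h1
        field_simp at h2
        exact Fin.ext (by exact_mod_cast add_right_cancel h2)
      have hsurj : ∀ j, ∃ i, lam i = g j := by
        rcases lt_or_gt_of_ne hc0 with hneg | hpos
        · have habs2 : |σ₁ + τ₁| = -(2*c) := by
            rw [h2c, abs_of_neg (by linarith)]
          intro j
          obtain ⟨i, hi⟩ := key j.rev
          refine ⟨i, ?_⟩
          rw [hi, hg]
          dsimp only
          rw [hcosrev j, habs2]
          ring
        · have habs2 : |σ₁ + τ₁| = 2*c := by
            rw [h2c, abs_of_pos (by linarith)]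
          intro j
          obtain ⟨i, hi⟩ := key j
          refine ⟨i, ?_⟩
          rw [hi, hg]
          dsimp only
          rw [habs2]
      exact aux_perm lam g hginj hsurj
  obtain ⟨e, he⟩ := part1
  have hfrobT : frobSq T = 2 * ((n:ℝ)-1) * c^2 := by
    have hentry : ∀ i j : Fin n, (T i j)^2 =
        (if (i:ℕ) = (j:ℕ)+1 then c^2 else 0) + (if (j:ℕ) = (i:ℕ)+1 then c^2 else 0) := by
      intro i j
      rw [hTdef, aux_tri_apply]
      split_ifs <;> first | (exfalso; omega) | ring
    have hsum : frobSq T =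
        (∑ i : Fin n, ∑ j : Fin n, (if (i:ℕ) = (j:ℕ)+1 then c^2 else 0))
      + (∑ i : Fin n, ∑ j : Fin n, (if (j:ℕ) = (i:ℕ)+1 then c^2 else 0)) := by
      simp only [frobSq]
      rw [← Finset.sum_add_distrib]
      refine Finset.sum_congr rfl (fun i _ => ?_)
      rw [← Finset.sum_add_distrib]
      exact Finset.sum_congr rfl (fun j _ => hentry i j)
    have hA : ∀ i : Fin n, (∑ j : Fin n, if (i:ℕ) = (j:ℕ)+1 then c^2 else 0)
        = (if 1 ≤ (i:ℕ) then c^2 else 0) := by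
      intro i
      by_cases hi : 1 ≤ (i:ℕ)
      · rw [if_pos hi, Finset.sum_eq_single (⟨(i:ℕ)-1, by have := i.isLt; omega⟩ : Fin n)]
        · exact if_pos (by simp; omega)
        · intro b _ hb; exact if_neg (fun hh => hb (Fin.ext (show (b:ℕ) = (i:ℕ)-1 by omega)))
        · intro h; exact absurd (Finset.mem_univ _) h
      · rw [if_neg hi, Finset.sum_eq_zero (fun j _ => if_neg (by omega))]
    have hB : ∀ i : Fin n, (∑ j : Fin n, if (j:ℕ) = (i:ℕ)+1 then c^2 else 0)
        = (if (i:ℕ)+1 < n then c^2 else 0) := by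
      intro i
      by_cases hi : (i:ℕ)+1 < n
      · rw [if_pos hi, Finset.sum_eq_single (⟨(i:ℕ)+1, hi⟩ : Fin n)]
        · exact if_pos (by simp)
        · intro b _ hb; exact if_neg (fun hh => hb (Fin.ext (show (b:ℕ) = (i:ℕ)+1 from hh)))
        · intro h; exact absurd (Finset.mem_univ _) h
      · rw [if_neg hi, Finset.sum_eq_zero (fun j _ => if_neg (by have := j.isLt; omega))]
    have hcast : ((n - 1 : ℕ) : ℝ) = (n:ℝ) - 1 := by
      rw [Nat.cast_sub hn, Nat.cast_one]
    have hcount1 : (∑ i : Fin n, if 1 ≤ (i:ℕ) then c^2 else 0) = ((n:ℝ)-1) * c^2 := by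
      rw [Fin.sum_univ_eq_sum_range (fun m => if 1 ≤ m then c^2 else 0),
        ← Finset.sum_filter, Finset.sum_const, aux_card_filter₁ hn, nsmul_eq_mul, hcast]
    have hcount2 : (∑ i : Fin n, if (i:ℕ)+1 < n then c^2 else 0) = ((n:ℝ)-1) * c^2 := by
      rw [Fin.sum_univ_eq_sum_range (fun m => if m+1 < n then c^2 else 0),
        ← Finset.sum_filter, Finset.sum_const, aux_card_filter₂ hn, nsmul_eq_mul, hcast]
    rw [hsum, Finset.sum_congr rfl (fun i _ => hA i), Finset.sum_congr rfl (fun i _ => hB i),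
      hcount1, hcount2]
    ring
  have hfrob3 : (1/2 : ℝ) * frobSq T = ((n:ℝ)-1)/4 * (σ₁+τ₁)^2 := by
    rw [hfrobT, h2c]; ring
  have hVT : V = Uᵀ := by
    rw [hVdef, hUdef, Matrix.star_eq_conjTranspose]
    ext i j
    simp [Matrix.conjTranspose_apply, Matrix.transpose_apply]
  have collapse : ∀ d1 d2 : Fin n → ℝ, (U * diagonal d1 * V) * (U * diagonal d2 * V)
      = U * diagonal (fun i => d1 i * d2 i) * V := by
    intro d1 d2
    have h4 : (U * diagonal d1 * V) * (U * diagonal d2 * V)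
        = U * (diagonal d1 * (V * U) * diagonal d2) * V := by noncomm_ring
    rw [h4, hVU, mul_one, Matrix.diagonal_mul_diagonal]
  have genfrob : ∀ d : Fin n → ℝ, frobSq (U * diagonal d * V) = ∑ i, (d i)^2 := by
    intro d
    have hsym : (U * diagonal d * V)ᵀ = U * diagonal d * V := by
      rw [Matrix.transpose_mul, Matrix.transpose_mul, Matrix.diagonal_transpose, hVT,
        Matrix.transpose_transpose, ← Matrix.mul_assoc]
    rw [aux_frobSq_trace, hsym, collapse, aux_trace_conj _ _ _ hVU, Matrix.trace_diagonal]
    exact Finset.sum_congr rfl (fun i _ => by ring)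
  have hsumlam : (∑ i, (lam i)^2) = frobSq T := by
    rw [hspec]
    exact (genfrob lam).symm
  have hhalf : (∑ i, (max 0 (-lam i))^2) = (1/2 : ℝ) * ∑ i, (lam i)^2 := by
    have h1 : ∀ f : ℝ → ℝ, (∑ i, f (lam i))
        = ∑ j : Fin n, f (|σ₁+τ₁| * Real.cos ((((j:ℕ):ℝ)+1) * π/((n:ℝ)+1))) := by
      intro f
      rw [← Equiv.sum_comp e (fun i => f (lam i))]
      exact Finset.sum_congr rfl (fun j _ => by rw [he j])
    rw [h1 (fun x => (max 0 (-x))^2), h1 (fun x => x^2)]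
    set w : Fin n → ℝ := fun j => |σ₁+τ₁| * Real.cos ((((j:ℕ):ℝ)+1) * π/((n:ℝ)+1)) with hw
    have hwrev : ∀ j : Fin n, w (Fin.revPerm j) = - w j := by
      intro j
      show w j.rev = - w j
      rw [hw]
      dsimp only
      rw [hcosrev j]
      ring
    have h2 : (∑ j, (max 0 (- w j))^2) = ∑ j, (max 0 (w j))^2 := by
      rw [← Equiv.sum_comp (Fin.revPerm) (fun j => (max 0 (w j))^2)]
      refine Finset.sum_congr rfl (fun j _ => ?_)
      rw [hwrev j]
    have h3 : (2:ℝ) * ∑ j, (max 0 (- w j))^2 = ∑ j, (w j)^2 :=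
      calc (2:ℝ) * ∑ j, (max 0 (- w j))^2
          = ∑ j, ((max 0 (- w j))^2 + (max 0 (w j))^2) := by
            rw [Finset.sum_add_distrib, ← h2]; ring
        _ = ∑ j, (w j)^2 := Finset.sum_congr rfl (fun j _ => aux_maxsq (w j))
    linarith
  have hsval : (∑ i, (max 0 (-lam i))^2) = ((n:ℝ)-1)/4 * (σ₁+τ₁)^2 := by
    rw [hhalf, hsumlam, hfrobT, h2c]; ring
  have hVH : V = Uᴴ := by rw [hVdef, hUdef, Matrix.star_eq_conjTranspose]
  have hmem : ∃ E : Matrix (Fin n) (Fin n) ℝ,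
      (T + E).PosSemidef ∧ ((n:ℝ)-1)/4 * (σ₁+τ₁)^2 = frobSq E := by
    refine ⟨U * diagonal (fun i => max 0 (-lam i)) * V, ?_, ?_⟩
    · have hTE : T + U * diagonal (fun i => max 0 (-lam i)) * V
          = U * diagonal (fun i => lam i + max 0 (-lam i)) * V := by
        rw [hspec]
        have h4 : U * diagonal lam * V + U * (diagonal fun i => max 0 (-lam i)) * V
            = U * (diagonal lam + diagonal fun i => max 0 (-lam i)) * V := by noncomm_ring
        rw [h4, Matrix.diagonal_add]
      rw [hTE]
      have hnn : ∀ i, 0 ≤ lam i + max 0 (-lam i) := by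
        intro i; rcases le_total (lam i) 0 with h | h
        · rw [max_eq_right (neg_nonneg.mpr h)]; linarith
        · rw [max_eq_left (neg_nonpos.mpr h)]; linarith
      have hpsd := (Matrix.posSemidef_diagonal_iff.mpr hnn).mul_mul_conjTranspose_same U
      rwa [← hVH] at hpsd
    · rw [genfrob]
      exact hsval.symm
  have hlb : ∀ d ∈ {d : ℝ | ∃ E : Matrix (Fin n) (Fin n) ℝ,
      (T + E).PosSemidef ∧ d = frobSq E}, ((n:ℝ)-1)/4 * (σ₁+τ₁)^2 ≤ d := by
    rintro d ⟨E, hpsd, rfl⟩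
    set B : Matrix (Fin n) (Fin n) ℝ := V * E * U with hB
    have hfrobB : frobSq B = frobSq E := by
      rw [aux_frobSq_trace, aux_frobSq_trace]
      have hBt : Bᵀ = V * Eᵀ * U := by
        rw [hB, Matrix.transpose_mul, Matrix.transpose_mul, hVT,
          Matrix.transpose_transpose, ← Matrix.mul_assoc]
      have h5 : Bᵀ * B = V * (Eᵀ * E) * U := by
        rw [hBt, hB]
        have h6 : (V * Eᵀ * U) * (V * E * U) = V * (Eᵀ * (U * V) * E) * U := by noncomm_ring
        rw [h6, hUV, mul_one]
      rw [h5, aux_trace_conj V U _ hUV]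
    have hdiagB : ∀ i, 0 ≤ lam i + B i i := by
      intro i
      have hpsd2 := hpsd.conjTranspose_mul_mul_same U
      have h6 : Uᴴ * (T + E) * U = diagonal lam + B := by
        rw [← hVH, Matrix.mul_add, Matrix.add_mul, hB]
        congr 1
        rw [hspec]
        have h7 : V * (U * diagonal lam * V) * U = (V*U) * diagonal lam * (V*U) := by
          noncomm_ring
        rw [h7, hVU, one_mul, mul_one]
      rw [h6] at hpsd2
      have h8 := aux_diag_nonneg hpsd2 i
      simpa [Matrix.diagonal_apply_eq] using h8
    have hBineq : ∀ i, (max 0 (-lam i))^2 ≤ (B i i)^2 := by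
      intro i
      rcases le_total (lam i) 0 with h | h
      · rw [max_eq_right (neg_nonneg.mpr h)]
        have h7 : -lam i ≤ B i i := by linarith [hdiagB i]
        have h8 : 0 ≤ -lam i := by linarith
        nlinarith
      · rw [max_eq_left (neg_nonpos.mpr h)]
        simpa using sq_nonneg (B i i)
    calc ((n:ℝ)-1)/4 * (σ₁+τ₁)^2 = ∑ i, (max 0 (-lam i))^2 := hsval.symm
      _ ≤ ∑ i, (B i i)^2 := Finset.sum_le_sum (fun i _ => hBineq i)
      _ ≤ frobSq B := by
          simp only [frobSq]
          refine Finset.sum_le_sum (fun i _ => ?_)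
          exact Finset.single_le_sum (f := fun j => (B i j)^2) (fun j _ => sq_nonneg _) (Finset.mem_univ i)
      _ = frobSq E := hfrobB
  refine ⟨⟨e, he⟩, ?_, hfrob3⟩
  exact IsLeast.csInf_eq ⟨hmem, hlb⟩
end
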